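/- If u and v have the same color after t iterations of color refinement started from the constant coloring, then for every k ≤ t, the number of walks of length k starting at u equals the number of walks of length k starting at v. -/

import Mathlib

/-- Type of Weisfeiler-Lehman colors after `t` refinement rounds. -/
def WLType : ℕ → Type
  | 0 => Unit
  | t+1 => WLType t × Multiset (WLType t)

instance instDecEqWLType : ∀ t, DecidableEq (WLType t)
  | 0 => inferInstanceAs (DecidableEq Unit)
  | t+1 =>
    letI := instDecEqWLType t
    inferInstanceAs (DecidableEq (WLType t × Multiset (WLType t)))

variable {V : Type*} [Fintype V] [DecidableEq V]

/-- The color refinement (1-WL) coloring after `t` iterations, starting from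
the constant coloring: `c^{t+1}(v) = (c^t(v), {{c^t(x) | x ∈ N(v)}})`. -/
def wl (G : SimpleGraph V) [DecidableRel G.Adj] : (t : ℕ) → V → WLType t
  | 0, _ => ()
  | t+1, v => (wl G t v, (G.neighborFinset v).val.map (wl G t))

/-- Number of walks of length `k` starting at `u`. -/
def walkCount (G : SimpleGraph V) [DecidableRel G.Adj] (k : ℕ) (u : V) : ℕ :=
  ∑ w : V, (G.adjMatrix ℕ ^ k) u w

lemma walkCount_zero (G : SimpleGraph V) [DecidableRel G.Adj] (u : V) :
    walkCount G 0 u = 1 := by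
  simp [walkCount, Matrix.one_apply]

lemma walkCount_succ (G : SimpleGraph V) [DecidableRel G.Adj] (k : ℕ) (u : V) :
    walkCount G (k+1) u = ∑ x ∈ G.neighborFinset u, walkCount G k x := by
  simp only [walkCount, pow_succ', Matrix.mul_apply, SimpleGraph.adjMatrix_apply,
    ite_mul, one_mul, zero_mul]
  rw [Finset.sum_comm]
  simp [Finset.sum_ite, SimpleGraph.neighborFinset_eq_filter]

theorem wl_walkCount (G : SimpleGraph V) [DecidableRel G.Adj]
    (t : ℕ) (u v : V) (h : wl G t u = wl G t v) :
    ∀ k : ℕ, k ≤ t → walkCount G k u = walkCount G k v := by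
  classical
  revert h
  induction t generalizing u v with
  | zero =>
    intro _ k hk
    interval_cases k
    simp [walkCount_zero]
  | succ t ih =>
    intro h k hk
    rw [wl, wl] at h
    change ((wl G t u, _) : WLType t × Multiset (WLType t)) = (wl G t v, _) at h
    rw [Prod.mk.injEq] at h
    obtain ⟨h1, h2⟩ := h
    cases k with
    | zero => simp [walkCount_zero]
    | succ k =>
      have hk' : k ≤ t := Nat.succ_le_succ_iff.mp hk
      set f : WLType t → ℕ := fun c =>
        if hc : ∃ x : V, wl G t x = c then walkCount G k hc.choose else 0 with hf
      have key : ∀ x : V, f (wl G t x) = walkCount G k x := by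
        intro x
        have hx : ∃ y : V, wl G t y = wl G t x := ⟨x, rfl⟩
        simp only [hf, dif_pos hx]
        exact ih _ _ hx.choose_spec k hk'
      have main : ∀ w : V,
          ∑ x ∈ G.neighborFinset w, walkCount G k x
            = (((G.neighborFinset w).val.map (wl G t)).map f).sum := by
        intro w
        rw [Multiset.map_map, Finset.sum]
        exact congrArg Multiset.sum <| Multiset.map_congr rfl (fun x _ => (key x).symm)
      rw [walkCount_succ, walkCount_succ, main, main, h2]

/-- If `u, v` have the same color after `t` iterations of color refinement, then
for every `k ≤ t` the number of walks of length `k` starting at `u` (row sum of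
the `k`-th adjacency-matrix power) equals the number of such walks starting at `v`. -/
theorem colorRefinement_walk_counts (G : SimpleGraph V) [DecidableRel G.Adj]
    (t : ℕ) (u v : V) (h : wl G t u = wl G t v) :
    ∀ k : ℕ, k ≤ t → ∑ w : V, (G.adjMatrix ℕ ^ k) u w = ∑ w : V, (G.adjMatrix ℕ ^ k) v w :=
  wl_walkCount G t u v h
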